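/- Let (β_m) be a sequence of reals strictly decreasing to 0. Then there exists a sequence (η_m) of reals strictly decreasing to 0 such that β_m ≤ η_m for all m and the difference sequence is nonincreasing: η_m − η_{m+1} ≥ η_{m+1} − η_{m+2} for all m ≥ 1. -/

import Mathlib

open Filter

/-- Block endpoints: `mseq N 0 = 0`, and each next endpoint is at least `N (j+1)`
and more than doubles, so block lengths are strictly increasing. -/
private def mseq (N : ℕ → ℕ) : ℕ → ℕ
  | 0 => 0
  | j + 1 => max (N (j + 1)) (2 * mseq N j + 1)

/-- Block index of `k`: the largest `j` with `mseq N j ≤ k`. -/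
private def idx (N : ℕ → ℕ) (k : ℕ) : ℕ := Nat.findGreatest (fun j => mseq N j ≤ k) k

/-- Slope on block `j`. -/
private noncomputable def sj (A : ℝ) (N : ℕ → ℕ) (j : ℕ) : ℝ :=
  A / 2 ^ j / ((mseq N (j + 1) : ℝ) - (mseq N j : ℝ))

/-- The majorant. -/
private noncomputable def eta (A : ℝ) (N : ℕ → ℕ) (k : ℕ) : ℝ :=
  2 * A - ∑ i ∈ Finset.range k, sj A N (idx N i)

theorem exists_threshold_majorant (β : ℕ → ℝ) (hanti : StrictAnti β)
    (hlim : Tendsto β atTop (nhds 0)) :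
    ∃ η : ℕ → ℝ, StrictAnti η ∧ Tendsto η atTop (nhds 0) ∧
      (∀ m, β m ≤ η m) ∧
      ∀ m, η (m + 1) - η (m + 2) ≤ η m - η (m + 1) := by
  -- positivity of β
  have hβpos : ∀ n, 0 < β n := by
    intro n
    have h1 : (0 : ℝ) ≤ β (n + 1) := by
      refine le_of_tendsto hlim ?_
      filter_upwards [eventually_ge_atTop (n + 1)] with k hk
      exact hanti.antitone hk
    exact lt_of_le_of_lt h1 (hanti (Nat.lt_succ_self n))
  set A : ℝ := β 0 with hA
  have hApos : 0 < A := hβpos 0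
  -- choose N
  have hNex : ∀ j : ℕ, ∃ N : ℕ, ∀ n ≥ N, β n < A / 2 ^ j := by
    intro j
    have hpos : (0 : ℝ) < A / 2 ^ j := by positivity
    have := hlim.eventually (gt_mem_nhds hpos)
    exact eventually_atTop.mp this
  choose N hN using hNex
  set m : ℕ → ℕ := mseq N with hm
  have hmsucc : ∀ j, m (j + 1) = max (N (j + 1)) (2 * m j + 1) := fun j => rfl
  have hm0 : m 0 = 0 := rfl
  have hmlt : ∀ j, m j < m (j + 1) := by
    intro j
    have : 2 * m j + 1 ≤ m (j + 1) := le_max_right _ _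
    omega
  have hmmono : StrictMono m := strictMono_nat_of_lt_succ hmlt
  have hmge : ∀ j, j ≤ m j := by
    intro j
    induction j with
    | zero => simp [hm0]
    | succ j ih => have := hmlt j; omega
  have hβm : ∀ j, β (m j) ≤ A / 2 ^ j := by
    intro j
    cases j with
    | zero => simp [hm0, hA]
    | succ j =>
      have h1 : N (j + 1) ≤ m (j + 1) := le_max_left _ _
      exact (hN (j + 1) (m (j + 1)) h1).le
  -- block lengths
  set L : ℕ → ℝ := fun j => (m (j + 1) : ℝ) - (m j : ℝ) with hLdef
  have hL1 : ∀ j, 1 ≤ L j := by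
    intro j
    have := hmlt j
    simp only [hLdef]
    have : (m j : ℝ) + 1 ≤ (m (j + 1) : ℝ) := by exact_mod_cast this
    linarith
  have hLpos : ∀ j, 0 < L j := fun j => lt_of_lt_of_le one_pos (hL1 j)
  have hLmono : ∀ j, L j ≤ L (j + 1) := by
    intro j
    have h1 : 2 * m (j + 1) + 1 ≤ m (j + 2) := le_max_right _ _
    have h1' : 2 * (m (j + 1) : ℝ) + 1 ≤ (m (j + 2) : ℝ) := by exact_mod_cast h1
    have h2 : (0 : ℝ) ≤ (m j : ℝ) := Nat.cast_nonneg _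
    simp only [hLdef]
    linarith
  -- slopes
  have hsval : ∀ j, sj A N j = A / 2 ^ j / L j := fun j => rfl
  have hspos : ∀ j, 0 < sj A N j := by
    intro j
    rw [hsval]
    exact div_pos (by positivity) (hLpos j)
  have hsanti : Antitone (sj A N) := by
    apply antitone_nat_of_succ_le
    intro j
    rw [hsval, hsval, div_div, div_div]
    have h1 : (2 : ℝ) ^ j ≤ 2 ^ (j + 1) := by
      apply pow_le_pow_right₀ one_le_two
      omega
    have h2 : (0:ℝ) < 2 ^ j * L j := by
      have := hLpos j
      positivity
    have h3 : (2:ℝ) ^ j * L j ≤ 2 ^ (j + 1) * L (j + 1) :=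
      mul_le_mul h1 (hLmono j) (hLpos j).le (by positivity)
    exact div_le_div_of_nonneg_left hApos.le h2 h3
  -- idx facts
  have hidx_spec : ∀ k, m (idx N k) ≤ k := by
    intro k
    exact Nat.findGreatest_spec (P := fun j => mseq N j ≤ k) (Nat.zero_le k) (by simp [← hm, hm0])
  have hidx_ge : ∀ j k, m j ≤ k → j ≤ idx N k := by
    intro j k hjk
    exact Nat.le_findGreatest (le_trans (hmge j) hjk) hjk
  have hidx_lt : ∀ k, k < m (idx N k + 1) := by
    intro k
    by_contra h
    push_neg at h
    have := hidx_ge (idx N k + 1) k h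
    omega
  have hidx_mono : Monotone (idx N) := by
    intro a b hab
    exact hidx_ge (idx N a) b (le_trans (hidx_spec a) hab)
  have hidx_eq : ∀ j k, m j ≤ k → k < m (j + 1) → idx N k = j := by
    intro j k h1 h2
    have hge := hidx_ge j k h1
    by_contra hne
    have hgt : j + 1 ≤ idx N k := by omega
    have := le_trans (hmmono.monotone hgt) (hidx_spec k)
    omega
  -- d : differences
  set d : ℕ → ℝ := fun i => sj A N (idx N i) with hd
  have hdpos : ∀ i, 0 < d i := fun i => hspos _
  have hdanti : Antitone d := fun a b hab => hsanti (hidx_mono hab)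
  have hetadef : ∀ k, eta A N k = 2 * A - ∑ i ∈ Finset.range k, d i := fun k => rfl
  have hetadiff : ∀ k, eta A N k - eta A N (k + 1) = d k := by
    intro k
    rw [hetadef, hetadef, Finset.sum_range_succ]
    ring
  have hetaanti : StrictAnti (eta A N) := by
    apply strictAnti_nat_of_succ_lt
    intro k
    have := hetadiff k
    have := hdpos k
    linarith
  -- value at block endpoints
  have hetam : ∀ j, eta A N (m j) = 2 * A / 2 ^ j := by
    intro j
    induction j with
    | zero => simp [hm0, hetadef]
    | succ j ih =>
      have hsum : ∑ i ∈ Finset.Ico (m j) (m (j + 1)), d i = L j * sj A N j := by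
        have hconst : ∀ i ∈ Finset.Ico (m j) (m (j + 1)), d i = sj A N j := by
          intro i hi
          rw [Finset.mem_Ico] at hi
          simp only [hd]
          rw [hidx_eq j i hi.1 hi.2]
        rw [Finset.sum_congr rfl hconst, Finset.sum_const, Nat.card_Ico, nsmul_eq_mul]
        congr 1
        simp only [hLdef]
        rw [Nat.cast_sub (hmlt j).le]
      have hsplit : ∑ i ∈ Finset.range (m (j + 1)), d i
          = ∑ i ∈ Finset.range (m j), d i + ∑ i ∈ Finset.Ico (m j) (m (j + 1)), d i := by
        rw [Finset.range_eq_Ico, Finset.range_eq_Ico]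
        exact (Finset.sum_Ico_consecutive d (Nat.zero_le _) (hmlt j).le).symm
      have hLs : L j * sj A N j = A / 2 ^ j := by
        have hL0 : L j ≠ 0 := (hLpos j).ne'
        have h20 : ((2:ℝ) ^ j) ≠ 0 := by positivity
        rw [hsval]
        field_simp
      have ihsum : ∑ i ∈ Finset.range (m j), d i = 2 * A - 2 * A / 2 ^ j := by
        have := hetadef (m j)
        rw [ih] at this
        linarith
      rw [hetadef, hsplit, ihsum, hsum, hLs]
      rw [pow_succ]
      field_simp
      ring
  -- majorant property
  have hmaj : ∀ k, β k ≤ eta A N k := by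
    intro k
    set j := idx N k with hj
    have h1 : eta A N (m (j + 1)) ≤ eta A N k := hetaanti.antitone (hidx_lt k).le
    have h2 : eta A N (m (j + 1)) = 2 * A / 2 ^ (j + 1) := hetam (j + 1)
    have h3 : β k ≤ β (m j) := hanti.antitone (hidx_spec k)
    have h4 : β (m j) ≤ A / 2 ^ j := hβm j
    have h5 : 2 * A / 2 ^ (j + 1) = A / 2 ^ j := by
      rw [pow_succ]; field_simp
    linarith
  -- tendsto
  have hidx_tendsto : Tendsto (fun k => idx N k) atTop atTop := by
    apply tendsto_atTop_atTop.mpr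
    intro j
    exact ⟨m j, fun k hk => hidx_ge j k hk⟩
  have hupper : ∀ k, eta A N k ≤ 2 * A / 2 ^ (idx N k) := by
    intro k
    have h1 : eta A N k ≤ eta A N (m (idx N k)) := hetaanti.antitone (hidx_spec k)
    rw [hetam] at h1
    exact h1
  have hlower : ∀ k, 0 ≤ eta A N k := fun k => le_trans (hβpos k).le (hmaj k)
  have htendsto : Tendsto (eta A N) atTop (nhds 0) := by
    have hgeo : Tendsto (fun j : ℕ => 2 * A / 2 ^ j) atTop (nhds 0) := by
      have h2 : Tendsto (fun j : ℕ => ((1 : ℝ) / 2) ^ j) atTop (nhds 0) := by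
        apply tendsto_pow_atTop_nhds_zero_of_lt_one <;> norm_num
      have := h2.const_mul (2 * A)
      simp only [mul_zero] at this
      convert this using 2 with j
      rw [div_pow, one_pow]
      ring
    have hcomp : Tendsto (fun k => 2 * A / 2 ^ (idx N k)) atTop (nhds 0) :=
      hgeo.comp hidx_tendsto
    exact squeeze_zero hlower hupper hcomp
  refine ⟨eta A N, hetaanti, htendsto, hmaj, ?_⟩
  intro k
  rw [hetadiff, hetadiff]
  exact hdanti (Nat.le_succ k)
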